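/- Let M be a metric space with metric ρ and base point e, and let ρ†(x,y) = (ρ(x,y) + |ρ(x,e) − ρ(y,e)|) / max(ρ(x,e), ρ(y,e)) on M \ {e}. Then the identity mapping from (M \ {e}, ρ†) to (M \ {e}, ρ) is a homeomorphism; in particular, for any sequence (x_n) and point x in M \ {e}, ρ†(x_n, x) → 0 if and only if ρ(x_n, x) → 0. -/
import Mathlib


open Filter

theorem stmt_4 {M : Type*} [MetricSpace M] (e : M)
    (d : M → M → ℝ)
    (hd : ∀ x y : M, d x y = (dist x y + |dist x e - dist y e|) / max (dist x e) (dist y e)) :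
    ∀ (xs : ℕ → M) (x : M), (∀ n, xs n ≠ e) → x ≠ e →
      (Tendsto (fun n => d (xs n) x) atTop (nhds 0) ↔
        Tendsto (fun n => dist (xs n) x) atTop (nhds 0)) := by
  intro xs x hxs hx
  have ha : (0:ℝ) < dist x e := dist_pos.mpr hx
  set a := dist x e with hadef
  have hbpos : ∀ n, (0:ℝ) < dist (xs n) e := fun n => dist_pos.mpr (hxs n)
  have hmax : ∀ n, (0:ℝ) < max (dist (xs n) e) a := fun n => lt_max_of_lt_right ha
  have hdnn : ∀ n, (0:ℝ) ≤ d (xs n) x := by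
    intro n
    rw [hd]
    apply div_nonneg
    · positivity
    · exact (hmax n).le
  constructor
  · -- d → 0 implies dist → 0
    intro h
    have hev : ∀ᶠ n in atTop, d (xs n) x < 1/2 := by
      have := h.eventually (eventually_lt_nhds (show (0:ℝ) < 1/2 by norm_num))
      exact this
    apply squeeze_zero' (Eventually.of_forall (fun n => dist_nonneg))
      (g := fun n => 2 * a * d (xs n) x)
    · filter_upwards [hev] with n hn
      set b := dist (xs n) e with hbdef
      have hb : 0 < b := hbpos n
      have hble : b ≤ 2 * a := by
        by_contra hgt
        push_neg at hgt
        have hba : a < b := lt_trans (by linarith) hgt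
        have : d (xs n) x ≥ 1/2 := by
          rw [hd]
          rw [max_eq_left hba.le]
          have : |b - a| = b - a := abs_of_nonneg (by linarith)
          rw [← hbdef, this]
          rw [ge_iff_le, le_div_iff₀ hb]
          have := dist_nonneg (x := xs n) (y := x)
          linarith
        linarith
      have key : dist (xs n) x + |b - a| = d (xs n) x * max b a := by
        rw [hd, ← hbdef, div_mul_cancel₀]
        exact (hmax n).ne'
      have h1 : dist (xs n) x ≤ d (xs n) x * max b a := by
        have := abs_nonneg (b - a); linarith
      have h2 : max b a ≤ 2 * a := max_le hble (by linarith)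
      calc dist (xs n) x ≤ d (xs n) x * max b a := h1
        _ ≤ d (xs n) x * (2 * a) := by
            exact mul_le_mul_of_nonneg_left h2 (hdnn n)
        _ = 2 * a * d (xs n) x := by ring
    · have := h.const_mul (2 * a)
      simpa using this
  · -- dist → 0 implies d → 0
    intro h
    apply squeeze_zero (fun n => hdnn n) (g := fun n => 2 / a * dist (xs n) x)
    · intro n
      rw [hd]
      have habs : |dist (xs n) e - dist x e| ≤ dist (xs n) x := abs_dist_sub_le _ _ _
      rw [div_le_iff₀ (hmax n)]
      have h2 : a ≤ max (dist (xs n) e) a := le_max_right _ _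
      have hdnn2 : (0:ℝ) ≤ dist (xs n) x := dist_nonneg
      have : 2 / a * dist (xs n) x * a ≤ 2 / a * dist (xs n) x * max (dist (xs n) e) a := by
        apply mul_le_mul_of_nonneg_left h2
        positivity
      have heq : 2 / a * dist (xs n) x * a = 2 * dist (xs n) x := by
        field_simp
      calc dist (xs n) x + |dist (xs n) e - a| ≤ 2 * dist (xs n) x := by
              rw [hadef]; linarith
        _ = 2 / a * dist (xs n) x * a := heq.symm
        _ ≤ _ := this
    · have := h.const_mul (2 / a)
      simpa using this
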